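/- Let R be a semisimple artinian ring and v = (a₁,…,aₙ)ᵗ a column vector over R with n ≥ 2. Write Σᵢ Raᵢ = Re with e an idempotent. Then there exists an elementary matrix ε ∈ Eₙ(R) such that ε·v = (0,…,0,e)ᵗ. -/

import Mathlib

open Submodule LinearMap

section Aux

variable {R : Type*} [Ring R]

/-- The sup of two disjoint submodules is isomorphic to their product. -/
noncomputable def supEquivProd {M : Type*} [AddCommGroup M] [Module R M]
    (p q : Submodule R M) (h : Disjoint p q) :
    ↥(p ⊔ q) ≃ₗ[R] (p × q) := by
  have h1 : IsCompl (comap (p ⊔ q).subtype p) (comap (p ⊔ q).subtype q) := by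
    constructor
    · rw [disjoint_iff, eq_bot_iff]
      rintro x ⟨hx1, hx2⟩
      have : (x : M) = 0 := (Submodule.disjoint_def.mp h) x hx1 hx2
      simpa [Submodule.mem_bot] using Subtype.ext this
    · rw [codisjoint_iff, eq_top_iff]
      rintro ⟨x, hx⟩ -
      obtain ⟨y, hy, z, hz, hyz⟩ := Submodule.mem_sup.mp hx
      have hrw : (⟨x, hx⟩ : ↥(p ⊔ q)) =
          ⟨y, le_sup_left (α := Submodule R M) hy⟩ + ⟨z, le_sup_right (α := Submodule R M) hz⟩ := by
        ext; simp [hyz.symm]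
      rw [hrw]
      exact add_mem (Submodule.mem_sup_left (by simpa [Submodule.mem_comap] using hy))
        (Submodule.mem_sup_right (by simpa [Submodule.mem_comap] using hz))
  exact (prodEquivOfIsCompl _ _ h1).symm.trans
    ((Submodule.comapSubtypeEquivOfLe le_sup_left).prodCongr
      (Submodule.comapSubtypeEquivOfLe le_sup_right))

/-- Quotients of a semisimple module by isomorphic simple submodules are isomorphic. -/
theorem quot_equiv_quot_of_simple {M : Type*} [AddCommGroup M] [Module R M]
    [IsSemisimpleModule R M] (S T : Submodule R M) [IsSimpleModule R S] [IsSimpleModule R T]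
    (e : S ≃ₗ[R] T) : Nonempty ((M ⧸ S) ≃ₗ[R] (M ⧸ T)) := by
  rcases eq_or_ne S T with rfl | hne
  · exact ⟨LinearEquiv.refl _ _⟩
  have hS : IsAtom S := isSimpleModule_iff_isAtom.mp ‹_›
  have hT : IsAtom T := isSimpleModule_iff_isAtom.mp ‹_›
  have hdisj : Disjoint S T := hS.disjoint_of_ne hT hne
  obtain ⟨W, hW⟩ := exists_isCompl (S ⊔ T)
  have hSW : Disjoint S W := hW.disjoint.mono_left le_sup_left
  have hTW : Disjoint T W := hW.disjoint.mono_left le_sup_right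
  have key : ∀ A B : Submodule R M, Disjoint A B → A ⊔ B = S ⊔ T →
      IsCompl A (B ⊔ W) := by
    intro A B hAB hABsup
    constructor
    · rw [Submodule.disjoint_def]
      intro x hxA hxBW
      obtain ⟨t, ht, w, hw, htw⟩ := Submodule.mem_sup.mp hxBW
      have hw1 : w ∈ S ⊔ T := by
        have hwx : w = x - t := by rw [← htw]; abel
        rw [hwx, ← hABsup]
        exact sub_mem (le_sup_left (α := Submodule R M) hxA)
          (le_sup_right (α := Submodule R M) ht)
      have hw0 : w = 0 := (Submodule.disjoint_def.mp hW.disjoint) w hw1 hw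
      have hxt : x = t := by rw [← htw, hw0, add_zero]
      exact (Submodule.disjoint_def.mp hAB) x hxA (hxt ▸ ht)
    · rw [codisjoint_iff, ← sup_assoc, hABsup, codisjoint_iff.mp hW.codisjoint]
  have hST : IsCompl S (T ⊔ W) := key S T hdisj rfl
  have hTS : IsCompl T (S ⊔ W) := key T S hdisj.symm (sup_comm T S)
  exact ⟨(quotientEquivOfIsCompl _ _ hST).trans <|
    (supEquivProd T W hTW).trans <|
    ((e.symm.prodCongr (LinearEquiv.refl R W)).trans <|
    (supEquivProd S W hSW).symm.trans
    (quotientEquivOfIsCompl _ _ hTS).symm)⟩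

/-- Cancel a simple module from a product decomposition. -/
theorem prod_cancel_simple [IsSemisimpleRing R] {S S' V V' : Type*}
    [AddCommGroup S] [Module R S] [AddCommGroup S'] [Module R S']
    [AddCommGroup V] [Module R V] [AddCommGroup V'] [Module R V']
    [IsSimpleModule R S] [IsSimpleModule R S']
    (e : S ≃ₗ[R] S') (ψ : (S × V) ≃ₗ[R] (S' × V')) : Nonempty (V ≃ₗ[R] V') := by
  let f1 : S →ₗ[R] S' × V' := ψ.toLinearMap ∘ₗ LinearMap.inl R S V
  let f2 : V →ₗ[R] S' × V' := ψ.toLinearMap ∘ₗ LinearMap.inr R S V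
  have hf1 : Function.Injective f1 := ψ.injective.comp LinearMap.inl_injective
  have hf2 : Function.Injective f2 := ψ.injective.comp LinearMap.inr_injective
  have hAB : IsCompl (range f1) (range f2) := by
    have h0 := LinearMap.isCompl_range_inl_inr (R := R) (M := S) (M₂ := V)
    have h1 : range f1 = Submodule.map (ψ : (S × V) →ₗ[R] (S' × V'))
        (range (LinearMap.inl R S V)) := LinearMap.range_comp _ _
    have h2 : range f2 = Submodule.map (ψ : (S × V) →ₗ[R] (S' × V'))
        (range (LinearMap.inr R S V)) := LinearMap.range_comp _ _
    have hmap : ∀ p : Submodule R (S × V),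
        Submodule.map (ψ : (S × V) →ₗ[R] (S' × V')) p = (Submodule.orderIsoMapComap ψ) p :=
      fun p => rfl
    rw [h1, h2, hmap, hmap]
    exact ⟨h0.disjoint.map_orderIso _, h0.codisjoint.map_orderIso _⟩
  let e1 : S ≃ₗ[R] range f1 := LinearEquiv.ofInjective f1 hf1
  let e2 : V ≃ₗ[R] range f2 := LinearEquiv.ofInjective f2 hf2
  let e1' : S' ≃ₗ[R] range (LinearMap.inl R S' V') :=
    LinearEquiv.ofInjective _ LinearMap.inl_injective
  let e2' : V' ≃ₗ[R] range (LinearMap.inr R S' V') :=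
    LinearEquiv.ofInjective _ LinearMap.inr_injective
  have i1 : IsSimpleModule R (range f1) := IsSimpleModule.congr e1.symm
  have i1' : IsSimpleModule R (range (LinearMap.inl R S' V')) := IsSimpleModule.congr e1'.symm
  obtain ⟨q⟩ := quot_equiv_quot_of_simple (range f1) (range (LinearMap.inl R S' V'))
    (e1.symm.trans (e.trans e1'))
  exact ⟨e2.trans <| (quotientEquivOfIsCompl _ _ hAB).symm.trans <| q.trans <|
    (quotientEquivOfIsCompl _ _ (LinearMap.isCompl_range_inl_inr)).trans e2'.symm⟩

/-- Cancellation: complements of isomorphic left ideals in a semisimple ring are isomorphic. -/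
theorem compl_cancel [IsSemisimpleRing R] :
    ∀ U U' V V' : Submodule R R, (U ≃ₗ[R] U') → IsCompl U V → IsCompl U' V' →
      Nonempty (V ≃ₗ[R] V') := by
  intro U
  induction U using WellFoundedLT.induction with
  | _ U ih =>
  intro U' V V' φ hV hV'
  rcases eq_or_ne U ⊥ with rfl | hU
  · have hsub : Subsingleton U' := φ.symm.toEquiv.subsingleton
    have hU'b : U' = ⊥ := by
      rw [eq_bot_iff]
      intro x hx
      have h0 : (⟨x, hx⟩ : U') = ⟨0, zero_mem U'⟩ := Subsingleton.elim _ _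
      simpa [Submodule.mem_bot] using congrArg Subtype.val h0
    subst hU'b
    have h1 : V = ⊤ := by
      have := codisjoint_iff.mp hV.codisjoint; rwa [bot_sup_eq] at this
    have h2 : V' = ⊤ := by
      have := codisjoint_iff.mp hV'.codisjoint; rwa [bot_sup_eq] at this
    subst h1; subst h2
    exact ⟨LinearEquiv.refl _ _⟩
  · obtain ⟨S, hSU, hSsimple⟩ := (IsSemisimpleModule.eq_bot_or_exists_simple_le U).resolve_left hU
    have hSatom : IsAtom S := isSimpleModule_iff_isAtom.mp hSsimple
    obtain ⟨W, hW⟩ := exists_isCompl S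
    set U₀ := W ⊓ U with hU₀def
    have hsupU : S ⊔ U₀ = U := by
      rw [hU₀def, ← sup_inf_assoc_of_le W hSU, codisjoint_iff.mp hW.codisjoint, top_inf_eq]
    have hSdU₀ : Disjoint S U₀ := hW.disjoint.mono_right inf_le_left
    have hU₀U : U₀ < U := by
      rcases lt_or_eq_of_le (inf_le_right : U₀ ≤ U) with h | h
      · exact h
      · exfalso
        have hSW : S ≤ W := (h ▸ hSU).trans inf_le_left
        exact hSatom.1 (disjoint_self.mp (hW.disjoint.mono_right hSW))
    let F : U →ₗ[R] R := U'.subtype ∘ₗ (φ : U →ₗ[R] U')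
    have hF : Function.Injective F := U'.injective_subtype.comp φ.injective
    have hrangeF : range F = U' := by
      rw [LinearMap.range_comp, LinearEquiv.range, Submodule.map_subtype_top]
    set TS := Submodule.map F (comap U.subtype S) with hTSdef
    set TU₀ := Submodule.map F (comap U.subtype U₀) with hTU₀def
    have hTle : ∀ X : Submodule R R, Submodule.map F (comap U.subtype X) ≤ U' := by
      intro X
      intro x hx
      obtain ⟨y, -, rfl⟩ := hx
      rw [← hrangeF]
      exact LinearMap.mem_range_self F y
    have hTSle : TS ≤ U' := hTle S
    have hTU₀le : TU₀ ≤ U' := hTle U₀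
    have eS : S ≃ₗ[R] TS :=
      (Submodule.comapSubtypeEquivOfLe hSU).symm.trans (Submodule.equivMapOfInjective F hF _)
    have eU₀ : U₀ ≃ₗ[R] TU₀ :=
      (Submodule.comapSubtypeEquivOfLe (inf_le_right : U₀ ≤ U)).symm.trans
        (Submodule.equivMapOfInjective F hF _)
    have hTsup : TS ⊔ TU₀ = U' := by
      have hcomap : comap U.subtype S ⊔ comap U.subtype U₀ = ⊤ := by
        rw [eq_top_iff]
        rintro ⟨x, hx⟩ -
        have hx' : x ∈ S ⊔ U₀ := hsupU.symm ▸ hx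
        obtain ⟨s, hs, u0, hu0, hsu⟩ := Submodule.mem_sup.mp hx'
        have hrw : (⟨x, hx⟩ : U) = ⟨s, hSU hs⟩ + ⟨u0, (inf_le_right : U₀ ≤ U) hu0⟩ := by
          ext; simp [hsu.symm]
        rw [hrw]
        exact add_mem (Submodule.mem_sup_left (by simpa [Submodule.mem_comap] using hs))
          (Submodule.mem_sup_right (by simpa [Submodule.mem_comap] using hu0))
      rw [hTSdef, hTU₀def, ← Submodule.map_sup, hcomap, Submodule.map_top, hrangeF]
    have hTdisj : Disjoint TS TU₀ := by
      rw [Submodule.disjoint_def]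
      rintro x hx1 hx2
      obtain ⟨y, hy, rfl⟩ := hx1
      obtain ⟨z, hz, hzy⟩ := hx2
      have hyz : z = y := hF hzy
      subst hyz
      have hmem : (z : R) ∈ S ⊓ U₀ := ⟨hy, hz⟩
      rw [disjoint_iff.mp hSdU₀, Submodule.mem_bot] at hmem
      have hz0 : z = 0 := Submodule.coe_eq_zero.mp hmem
      rw [hz0, map_zero]
    have hTSsimple : IsSimpleModule R TS := IsSimpleModule.congr eS.symm
    have hVc : IsCompl U₀ (S ⊔ V) := by
      constructor
      · rw [Submodule.disjoint_def]
        intro x hxU₀ hxSV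
        obtain ⟨s, hs, w, hw, hsw⟩ := Submodule.mem_sup.mp hxSV
        have hw1 : w = x - s := by rw [← hsw]; abel
        have hw2 : w ∈ U := by
          rw [hw1]; exact sub_mem ((inf_le_right : U₀ ≤ U) hxU₀) (hSU hs)
        have hw0 : w = 0 := (Submodule.disjoint_def.mp hV.disjoint) w hw2 hw
        have hxs : x = s := by rw [← hsw, hw0, add_zero]
        exact (Submodule.disjoint_def.mp hSdU₀.symm) x hxU₀ (hxs ▸ hs)
      · rw [codisjoint_iff, ← sup_assoc, sup_comm U₀ S, hsupU, codisjoint_iff.mp hV.codisjoint]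
    have hVc' : IsCompl TU₀ (TS ⊔ V') := by
      constructor
      · rw [Submodule.disjoint_def]
        intro x hxU₀ hxSV
        obtain ⟨s, hs, w, hw, hsw⟩ := Submodule.mem_sup.mp hxSV
        have hw1 : w = x - s := by rw [← hsw]; abel
        have hw2 : w ∈ U' := by
          rw [hw1]; exact sub_mem (hTU₀le hxU₀) (hTSle hs)
        have hw0 : w = 0 := (Submodule.disjoint_def.mp hV'.disjoint) w hw2 hw
        have hxs : x = s := by rw [← hsw, hw0, add_zero]
        exact (Submodule.disjoint_def.mp hTdisj.symm) x hxU₀ (hxs ▸ hs)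
      · rw [codisjoint_iff, ← sup_assoc, sup_comm TU₀ TS, hTsup,
          codisjoint_iff.mp hV'.codisjoint]
    obtain ⟨η⟩ := ih U₀ hU₀U TU₀ (S ⊔ V) (TS ⊔ V') eU₀ hVc hVc'
    have hdSV : Disjoint S V := hV.disjoint.mono_left hSU
    have hdTSV' : Disjoint TS V' := hV'.disjoint.mono_left hTSle
    exact prod_cancel_simple eS
      ((supEquivProd S V hdSV).symm.trans (η.trans (supEquivProd TS V' hdTSV')))

lemma mul_idem_of_mem_span {e z : R} (he : e * e = e) (hz : z ∈ span R {e}) : z * e = z := by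
  obtain ⟨c, rfl⟩ := Submodule.mem_span_singleton.mp hz
  simp only [smul_eq_mul, mul_assoc, he]

lemma isCompl_span_idem {e : R} (he : e * e = e) :
    IsCompl (span R {e}) (span R {1 - e}) := by
  have he' : (1 - e) * (1 - e) = 1 - e := by
    have h : (1 - e) * (1 - e) = 1 - e - e + e * e := by noncomm_ring
    rw [h, he]; abel
  constructor
  · rw [Submodule.disjoint_def]
    intro x hx1 hx2
    have h1 : x * e = x := mul_idem_of_mem_span he hx1
    have h2 : x * (1 - e) = x := mul_idem_of_mem_span he' hx2
    have h3 : x * (1 - e) = x - x * e := by rw [mul_sub, mul_one]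
    have h4 : x * e = 0 := sub_eq_self.mp (by rw [← h3, h2])
    rw [← h1, h4]
  · rw [codisjoint_iff, eq_top_iff]
    intro x _
    have hx : x = x * e + x * (1 - e) := by rw [mul_sub, mul_one]; abel
    rw [hx]
    exact add_mem (Submodule.mem_sup_left (Submodule.mem_span_singleton.mpr ⟨x, rfl⟩))
      (Submodule.mem_sup_right (Submodule.mem_span_singleton.mpr ⟨x, rfl⟩))

/-- Every element of a semisimple ring is unit-regular. -/
theorem exists_unit_regular [IsSemisimpleRing R] (x : R) : ∃ v : Rˣ, x * ↑v * x = x := by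
  obtain ⟨e, heidem, he⟩ := IsSemisimpleRing.ideal_eq_span_idempotent (Ideal.span {x})
  have hee : e * e = e := heidem
  have hxe : x ∈ span R {e} := by
    have hmem0 : x ∈ Ideal.span ({e} : Set R) := by
      rw [← he]; exact Ideal.subset_span rfl
    exact hmem0
  have hxe' : x * e = x := mul_idem_of_mem_span hee hxe
  obtain ⟨y, hy⟩ : ∃ y : R, y * x = e := by
    have hmem : e ∈ Ideal.span ({x} : Set R) := by
      rw [he]; exact Ideal.subset_span rfl
    obtain ⟨c, hc⟩ := Submodule.mem_span_singleton.mp hmem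
    exact ⟨c, hc⟩
  set f := x * y with hf
  have hfx : f * x = x := by rw [hf, mul_assoc, hy, hxe']
  have hff : f * f = f := by
    have h : f * f = (f * x) * y := by rw [hf]; noncomm_ring
    rw [h, hfx, hf]
  have hmap1 : ∀ z ∈ span R {e}, z * y ∈ span R {f} := by
    intro z hz
    obtain ⟨c, rfl⟩ := Submodule.mem_span_singleton.mp hz
    refine Submodule.mem_span_singleton.mpr ⟨c * y, ?_⟩
    rw [smul_eq_mul, smul_eq_mul, hf, ← hy]
    noncomm_ring
  have hmap2 : ∀ w ∈ span R {f}, w * x ∈ span R {e} := by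
    intro w hw
    obtain ⟨c, rfl⟩ := Submodule.mem_span_singleton.mp hw
    refine Submodule.mem_span_singleton.mpr ⟨c * x, ?_⟩
    rw [smul_eq_mul, smul_eq_mul, hf, ← hy]
    noncomm_ring
  let φ : (span R {e} : Submodule R R) ≃ₗ[R] (span R {f} : Submodule R R) :=
    { toFun := fun z => ⟨(z : R) * y, hmap1 z z.2⟩
      map_add' := fun a b => Subtype.ext (add_mul _ _ _)
      map_smul' := fun r a => Subtype.ext (by simp [smul_eq_mul, mul_assoc])
      invFun := fun w => ⟨(w : R) * x, hmap2 w w.2⟩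
      left_inv := fun z => Subtype.ext (by
        show (z : R) * y * x = z
        rw [mul_assoc, hy]
        exact mul_idem_of_mem_span hee z.2)
      right_inv := fun w => Subtype.ext (by
        show (w : R) * x * y = w
        rw [mul_assoc, ← hf]
        exact mul_idem_of_mem_span hff w.2) }
  have hcompl_e := isCompl_span_idem hee
  have hcompl_f := isCompl_span_idem hff
  obtain ⟨σ⟩ := compl_cancel (span R {e}) (span R {f}) (span R {1 - e}) (span R {1 - f})
    φ hcompl_e hcompl_f
  let Ψ : R ≃ₗ[R] R :=
    (prodEquivOfIsCompl _ _ hcompl_e).symm.trans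
      ((φ.prodCongr σ).trans (prodEquivOfIsCompl _ _ hcompl_f))
  have hΨ : ∀ z : R, Ψ z = z * Ψ 1 := by
    intro z
    have h1 : Ψ (z • (1 : R)) = z • Ψ 1 := map_smul Ψ z 1
    simpa [smul_eq_mul] using h1
  have hdecomp : (prodEquivOfIsCompl _ _ hcompl_e).symm (1 : R)
      = (⟨e, Submodule.subset_span rfl⟩, ⟨1 - e, Submodule.subset_span rfl⟩) := by
    rw [LinearEquiv.symm_apply_eq, Submodule.coe_prodEquivOfIsCompl']
    simp
  set w : R := (σ ⟨1 - e, Submodule.subset_span rfl⟩ : R) with hwdef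
  have hΨ1 : Ψ 1 = e * y + w := by
    show ((prodEquivOfIsCompl _ _ hcompl_e).symm.trans
      ((φ.prodCongr σ).trans (prodEquivOfIsCompl _ _ hcompl_f))) 1 = e * y + w
    rw [LinearEquiv.trans_apply, LinearEquiv.trans_apply, hdecomp, LinearEquiv.prodCongr_apply,
      Submodule.coe_prodEquivOfIsCompl']
    rfl
  set v := Ψ 1 with hv
  obtain ⟨c, hc⟩ := Submodule.mem_span_singleton.mp
    (σ ⟨1 - e, Submodule.subset_span rfl⟩).2
  have hwc : w = c * (1 - f) := by rw [hwdef, ← hc, smul_eq_mul]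
  have hfx0 : (1 - f) * x = 0 := by rw [sub_mul, one_mul, hfx, sub_self]
  have hwx : w * x = 0 := by rw [hwc, mul_assoc, hfx0, mul_zero]
  have hxvx : x * v * x = x := by
    rw [hΨ1, mul_add, add_mul]
    have h1 : x * (e * y) * x = x := by
      rw [← mul_assoc, hxe', mul_assoc, hy, hxe']
    have h2 : x * w * x = 0 := by rw [mul_assoc, hwx, mul_zero]
    rw [h1, h2, add_zero]
  obtain ⟨c₀, hc₀⟩ := Ψ.surjective 1
  have hc₀v : c₀ * v = 1 := by rw [← hΨ c₀, hc₀]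
  have hvc₀ : v * c₀ = 1 := by
    have h1 : Ψ (v * c₀) = Ψ 1 := by
      rw [hΨ (v * c₀), hΨ 1, mul_assoc, hc₀v, mul_one, one_mul]
    exact Ψ.injective h1
  exact ⟨⟨v, c₀, hvc₀, hc₀v⟩, hxvx⟩

/-- Stable-range-type lemma: the span of a pair can be realized by a single combination. -/
theorem span_pair_gen [IsSemisimpleRing R] (a b : R) :
    ∃ t : R, span R {b + t * a} = span R {a} ⊔ span R {b} := by
  obtain ⟨u, hu⟩ := exists_unit_regular a
  set e₁ := (u : R) * a with he₁
  have he₁e₁ : e₁ * e₁ = e₁ := by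
    have h : (u : R) * a * ((u : R) * a) = (u : R) * (a * (u : R) * a) := by noncomm_ring
    rw [he₁, h, hu]
  have hae₁ : a * e₁ = a := by rw [he₁, ← mul_assoc, hu]
  set b₁ := b - b * e₁ with hb₁
  have hb₁e₁ : b₁ * e₁ = 0 := by rw [hb₁, sub_mul, mul_assoc, he₁e₁, sub_self]
  obtain ⟨v, hv⟩ := exists_unit_regular b₁
  set ρ := (v : R) * b₁ with hρ
  have hρρ : ρ * ρ = ρ := by
    have h : (v : R) * b₁ * ((v : R) * b₁) = (v : R) * (b₁ * (v : R) * b₁) := by noncomm_ring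
    rw [hρ, h, hv]
  have hρe₁ : ρ * e₁ = 0 := by rw [hρ, mul_assoc, hb₁e₁, mul_zero]
  set t := ((v⁻¹ : Rˣ) : R) * (u : R) - b * (u : R) with ht
  set g := b + t * a with hg
  have hgb : g = b₁ + ((v⁻¹ : Rˣ) : R) * e₁ := by
    rw [hg, ht, hb₁, he₁]; noncomm_ring
  set xx := e₁ * (1 - ρ) * (v : R) with hxx
  have hxg : xx * g = e₁ := by
    have k1 : (1 - ρ) * ρ = 0 := by rw [sub_mul, one_mul, hρρ, sub_self]
    have k2 : (1 - ρ) * e₁ = e₁ := by rw [sub_mul, one_mul, hρe₁, sub_zero]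
    have k3 : (v : R) * (((v⁻¹ : Rˣ) : R) * e₁) = e₁ := by
      rw [← mul_assoc, Units.mul_inv, one_mul]
    calc xx * g
        = e₁ * ((1 - ρ) * ((v : R) * b₁)) + e₁ * ((1 - ρ) * ((v : R) * (((v⁻¹ : Rˣ) : R) * e₁))) := by
          rw [hxx, hgb]; noncomm_ring
      _ = e₁ * ((1 - ρ) * ρ) + e₁ * ((1 - ρ) * e₁) := by rw [← hρ, k3]
      _ = e₁ := by rw [k1, k2, mul_zero, zero_add, he₁e₁]
  have ha_mem : a ∈ span R {g} :=
    Submodule.mem_span_singleton.mpr ⟨a * xx, by rw [smul_eq_mul, mul_assoc, hxg, hae₁]⟩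
  refine ⟨t, ?_⟩
  rw [← hg]
  apply le_antisymm
  · rw [Submodule.span_le, Set.singleton_subset_iff, hg]
    exact add_mem (Submodule.mem_sup_right (Submodule.subset_span rfl))
      (Submodule.mem_sup_left (Submodule.mem_span_singleton.mpr ⟨t, rfl⟩))
  · apply sup_le <;> rw [Submodule.span_le, Set.singleton_subset_iff]
    · exact ha_mem
    · have hb_eq : b = g - t * a := by rw [hg]; abel
      rw [hb_eq]
      refine sub_mem (Submodule.subset_span rfl) ?_
      have := Submodule.smul_mem (span R {g}) t ha_mem
      simpa [smul_eq_mul] using this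

end Aux

section Matrices

variable {R : Type*} [Ring R] {n : ℕ}

/-- The set of elementary transvection matrices. -/
def ElemMats (R : Type*) [Ring R] (n : ℕ) : Set (Matrix (Fin n) (Fin n) R) :=
  {M | ∃ (i j : Fin n) (a : R), i ≠ j ∧ M = 1 + Matrix.single i j a}

/-- Reachability of one vector from another by elementary row operations. -/
def Reach (x y : Fin n → R) : Prop :=
  ∃ ε ∈ Submonoid.closure (ElemMats R n), ε.mulVec x = y

lemma Reach.rfl (x : Fin n → R) : Reach x x :=
  ⟨1, one_mem _, Matrix.one_mulVec x⟩

lemma Reach.trans {x y z : Fin n → R} (h1 : Reach x y) (h2 : Reach y z) : Reach x z := by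
  obtain ⟨ε₁, hm1, he1⟩ := h1
  obtain ⟨ε₂, hm2, he2⟩ := h2
  exact ⟨ε₂ * ε₁, mul_mem hm2 hm1, by rw [← Matrix.mulVec_mulVec, he1, he2]⟩

lemma Reach.step {x : Fin n → R} {i j : Fin n} (hij : i ≠ j) (c : R) :
    Reach x (Function.update x i (x i + c * x j)) := by
  refine ⟨1 + Matrix.single i j c, Submonoid.subset_closure ⟨i, j, c, hij, Eq.refl _⟩, ?_⟩
  have hstd : ∀ k, (Matrix.single i j c).mulVec x k = if k = i then c * x j else 0 := by
    intro k
    rcases eq_or_ne k i with rfl | hk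
    · simp [Matrix.mulVec, dotProduct, Matrix.single, ite_and]
    · simp [Matrix.mulVec, dotProduct, Matrix.single, ite_and, hk, Ne.symm hk]
  funext k
  rw [Matrix.add_mulVec, Matrix.one_mulVec]
  show x k + (Matrix.single i j c).mulVec x k = _
  rcases eq_or_ne k i with rfl | hk
  · rw [hstd, if_pos (Eq.refl _), Function.update_self]
  · rw [hstd, if_neg hk, add_zero, Function.update_of_ne hk]

lemma span_range_update_eq {x : Fin n → R} {i j : Fin n} (hij : i ≠ j) (c : R) :
    span R (Set.range (Function.update x i (x i + c * x j))) = span R (Set.range x) := by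
  apply le_antisymm <;> rw [Submodule.span_le] <;> rintro z ⟨k, rfl⟩
  · rcases eq_or_ne k i with rfl | hk
    · rw [Function.update_self]
      refine add_mem (Submodule.subset_span ⟨k, Eq.refl _⟩) ?_
      have := Submodule.smul_mem (span R (Set.range x)) c (Submodule.subset_span ⟨j, Eq.refl _⟩)
      simpa [smul_eq_mul] using this
    · rw [Function.update_of_ne hk]; exact Submodule.subset_span ⟨k, Eq.refl _⟩
  · rcases eq_or_ne k i with rfl | hk
    · have h1 : x k = Function.update x k (x k + c * x j) k
          - c * Function.update x k (x k + c * x j) j := by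
        rw [Function.update_self, Function.update_of_ne (Ne.symm hij)]
        abel
      have hmem : Function.update x k (x k + c * x j) k
          - c * Function.update x k (x k + c * x j) j
          ∈ span R (Set.range (Function.update x k (x k + c * x j))) := by
        refine sub_mem (Submodule.subset_span ⟨k, Eq.refl _⟩) ?_
        have h2 := Submodule.smul_mem (span R (Set.range (Function.update x k (x k + c * x j)))) c
          (Submodule.subset_span ⟨j, Eq.refl _⟩)
        simpa [smul_eq_mul] using h2
      rwa [← h1] at hmem
    · have : x k = Function.update x i (x i + c * x j) k := (Function.update_of_ne hk _ _).symm
      rw [this]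
      exact Submodule.subset_span ⟨k, Eq.refl _⟩

lemma fold_reach [IsSemisimpleRing R] (v : Fin n → R) :
    ∀ k : ℕ, ∀ hk : k < n, ∃ w : Fin n → R, Reach v w ∧
      span R (Set.range w) = span R (Set.range v) ∧
      (∀ j : Fin n, k < j.1 → w j = v j) ∧
      span R {w ⟨k, hk⟩} = span R (v '' {i : Fin n | i.1 ≤ k}) := by
  intro k
  induction k with
  | zero =>
    intro hk
    refine ⟨v, Reach.rfl v, Eq.refl _, fun j _ => Eq.refl _, ?_⟩
    have hs : (v '' {i : Fin n | i.1 ≤ 0}) = {v ⟨0, hk⟩} := by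
      apply Set.Subset.antisymm
      · rintro z ⟨i, hi, rfl⟩
        have : i = ⟨0, hk⟩ := Fin.ext (Nat.le_zero.mp hi)
        rw [this]; exact Set.mem_singleton _
      · intro z hz
        rw [Set.mem_singleton_iff] at hz
        exact ⟨⟨0, hk⟩, Nat.le_refl 0, hz.symm⟩
    rw [hs]
  | succ k ih =>
    intro hk
    have hk' : k < n := Nat.lt_of_succ_lt hk
    obtain ⟨w, hr, hspan, hhigh, hkspan⟩ := ih hk'
    obtain ⟨t, ht⟩ := span_pair_gen (w ⟨k, hk'⟩) (w ⟨k + 1, hk⟩)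
    have hij : (⟨k + 1, hk⟩ : Fin n) ≠ ⟨k, hk'⟩ := by
      simp only [ne_eq, Fin.mk.injEq]; omega
    set w' := Function.update w ⟨k + 1, hk⟩ (w ⟨k + 1, hk⟩ + t * w ⟨k, hk'⟩) with hw'
    refine ⟨w', hr.trans (Reach.step hij t), ?_, ?_, ?_⟩
    · rw [hw', span_range_update_eq hij t, hspan]
    · intro j hj
      have hne : j ≠ ⟨k + 1, hk⟩ := by
        simp only [ne_eq, Fin.ext_iff]; omega
      rw [hw', Function.update_of_ne hne, hhigh j (by omega)]
    · have hupd : w' ⟨k + 1, hk⟩ = w ⟨k + 1, hk⟩ + t * w ⟨k, hk'⟩ := by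
        rw [hw', Function.update_self]
      have hb : w ⟨k + 1, hk⟩ = v ⟨k + 1, hk⟩ := hhigh _ (by simp)
      have hidx : {i : Fin n | i.1 ≤ k + 1}
          = {i : Fin n | i.1 ≤ k} ∪ {(⟨k + 1, hk⟩ : Fin n)} := by
        ext i
        constructor
        · intro hi
          rcases eq_or_ne i.1 (k + 1) with he | hne
          · exact Or.inr (by rw [Set.mem_singleton_iff]; exact Fin.ext he)
          · exact Or.inl (by simp only [Set.mem_setOf_eq] at hi ⊢; omega)
        · intro hi
          rcases hi with hi | hi
          · simp only [Set.mem_setOf_eq] at hi ⊢; omega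
          · rw [Set.mem_singleton_iff] at hi
            subst hi
            show k + 1 ≤ k + 1
            exact le_rfl
      have hsets : (v '' {i : Fin n | i.1 ≤ k + 1})
          = (v '' {i : Fin n | i.1 ≤ k}) ∪ {v ⟨k + 1, hk⟩} := by
        rw [hidx, Set.image_union, Set.image_singleton]
      rw [hupd, ht, hsets, Submodule.span_union, hkspan, hb]

end Matrices

/-- Let `R` be a semisimple artinian ring and `v = (a₁,…,aₙ)ᵗ` a column
vector over `R` with `n ≥ 2`. Write `Σᵢ Raᵢ = Re` with `e` an idempotent. Then there
is an elementary matrix `ε ∈ Eₙ(R)` (the subgroup generated by the transvections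
`I + a·e_{ij}`, `i ≠ j`) with `ε·v = (0,…,0,e)ᵗ`. -/
theorem elementary_reduces_vector_to_idempotent {R : Type*} [Ring R]
    [IsSemisimpleRing R] (n : ℕ) (hn : 2 ≤ n) (v : Fin n → R) (e : R)
    (he : e * e = e)
    (h : Submodule.span R (Set.range v) = Submodule.span R ({e} : Set R)) :
    ∃ ε ∈ Submonoid.closure
        {M : Matrix (Fin n) (Fin n) R |
          ∃ (i j : Fin n) (a : R), i ≠ j ∧ M = 1 + Matrix.single i j a},
      ε.mulVec v = Pi.single ⟨n - 1, by omega⟩ e := by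
  classical
  have hm1 : n - 1 < n := by omega
  set m : Fin n := ⟨n - 1, hm1⟩ with hm
  obtain ⟨w, hrw, hspanw, -, hkspan⟩ := fold_reach v (n - 1) hm1
  have hall : {i : Fin n | i.1 ≤ n - 1} = Set.univ := by
    ext i
    simp only [Set.mem_setOf_eq, Set.mem_univ, iff_true]
    have := i.isLt
    omega
  rw [hall, Set.image_univ, h] at hkspan
  have hwm_span : span R {w m} = span R {e} := hkspan
  have hw_mem : ∀ j, w j ∈ span R {w m} := by
    intro j
    rw [hwm_span, ← h, ← hspanw]
    exact Submodule.subset_span ⟨j, Eq.refl _⟩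
  have hr_ex : ∀ j : Fin n, ∃ r : R, r * w m = w j := by
    intro j
    obtain ⟨r, hr⟩ := Submodule.mem_span_singleton.mp (hw_mem j)
    exact ⟨r, by rwa [smul_eq_mul] at hr⟩
  choose r hr using hr_ex
  have clear : ∀ s : Finset (Fin n), ∃ w2 : Fin n → R, Reach w w2 ∧
      ∀ j : Fin n, w2 j = if j ∈ s ∧ j ≠ m then 0 else w j := by
    intro s
    induction s using Finset.induction_on with
    | empty => exact ⟨w, Reach.rfl w, fun j => by simp⟩
    | @insert j0 s hj0 ih =>
      obtain ⟨w2, hr2, hval⟩ := ih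
      rcases eq_or_ne j0 m with heq | hj0m
      · refine ⟨w2, hr2, fun k => ?_⟩
        rw [hval k]
        by_cases hkm : k = m
        · simp [hkm]
        · have hmem : k ∈ insert j0 s ↔ k ∈ s := by
            rw [Finset.mem_insert]
            constructor
            · rintro (h' | h')
              · exact absurd (h'.trans heq) hkm
              · exact h'
            · exact Or.inr
          simp [hkm, hmem]
      · have hw2m : w2 m = w m := by rw [hval m]; simp
        have hw2j0 : w2 j0 = w j0 := by rw [hval j0]; simp [hj0]
        refine ⟨Function.update w2 j0 (w2 j0 + (-(r j0)) * w2 m),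
          hr2.trans (Reach.step hj0m (-(r j0))), fun k => ?_⟩
        rcases eq_or_ne k j0 with rfl | hk
        · rw [Function.update_self, hw2j0, hw2m, neg_mul, ← sub_eq_add_neg, hr k, sub_self,
            if_pos ⟨Finset.mem_insert_self _ _, hj0m⟩]
        · rw [Function.update_of_ne hk, hval k]
          by_cases hks : k ∈ s <;> by_cases hkm : k = m <;>
            simp [Finset.mem_insert, hk, hks, hkm]
  obtain ⟨w2, hrw2, hw2⟩ := clear Finset.univ
  have hw2m : w2 m = w m := by rw [hw2 m]; simp
  have hw2j : ∀ j, j ≠ m → w2 j = 0 := fun j hj => by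
    rw [hw2 j]; simp [hj]
  set b := w m with hb
  have h0n : (0 : ℕ) < n := by omega
  set i₀ : Fin n := ⟨0, h0n⟩ with hi₀
  have hi₀m : i₀ ≠ m := by
    rw [hi₀, hm, ne_eq, Fin.mk.injEq]
    omega
  obtain ⟨u, hu⟩ : ∃ u : R, u * b = e := by
    have hmem : e ∈ span R {b} := by rw [hwm_span]; exact Submodule.subset_span rfl
    obtain ⟨u, hu⟩ := Submodule.mem_span_singleton.mp hmem
    exact ⟨u, by rwa [smul_eq_mul] at hu⟩
  obtain ⟨s₀, hs₀⟩ : ∃ s₀ : R, s₀ * e = b := by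
    have hmem : b ∈ span R {e} := by rw [← hwm_span]; exact Submodule.subset_span rfl
    obtain ⟨s₀, hs₀⟩ := Submodule.mem_span_singleton.mp hmem
    exact ⟨s₀, by rwa [smul_eq_mul] at hs₀⟩
  set x₁ := Function.update w2 i₀ (w2 i₀ + 1 * w2 m) with hx₁
  have hx₁i₀ : x₁ i₀ = b := by
    rw [hx₁, Function.update_self, hw2j i₀ hi₀m, hw2m, zero_add, one_mul]
  have hx₁m : x₁ m = b := by
    rw [hx₁, Function.update_of_ne (Ne.symm hi₀m), hw2m]
  have hx₁k : ∀ k, k ≠ i₀ → k ≠ m → x₁ k = 0 := fun k h1 h2 => by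
    rw [hx₁, Function.update_of_ne h1, hw2j k h2]
  set x₂ := Function.update x₁ m (x₁ m + (u - 1) * x₁ i₀) with hx₂
  have hx₂m : x₂ m = e := by
    rw [hx₂, Function.update_self, hx₁m, hx₁i₀, sub_mul, one_mul]
    rw [show b + (u * b - b) = u * b by abel, hu]
  have hx₂i₀ : x₂ i₀ = b := by
    rw [hx₂, Function.update_of_ne hi₀m, hx₁i₀]
  have hx₂k : ∀ k, k ≠ i₀ → k ≠ m → x₂ k = 0 := fun k h1 h2 => by
    rw [hx₂, Function.update_of_ne h2, hx₁k k h1 h2]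
  set x₃ := Function.update x₂ i₀ (x₂ i₀ + (-s₀) * x₂ m) with hx₃
  have hx₃i₀ : x₃ i₀ = 0 := by
    rw [hx₃, Function.update_self, hx₂i₀, hx₂m, neg_mul, ← sub_eq_add_neg, hs₀, sub_self]
  have hx₃m : x₃ m = e := by
    rw [hx₃, Function.update_of_ne (Ne.symm hi₀m), hx₂m]
  have hx₃k : ∀ k, k ≠ i₀ → k ≠ m → x₃ k = 0 := fun k h1 h2 => by
    rw [hx₃, Function.update_of_ne h1, hx₂k k h1 h2]
  have hfinal : Reach v x₃ :=
    hrw.trans (hrw2.trans ((Reach.step hi₀m 1).trans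
      ((Reach.step (Ne.symm hi₀m) (u - 1)).trans (Reach.step hi₀m (-s₀)))))
  have hx₃eq : x₃ = Pi.single m e := by
    funext k
    rcases eq_or_ne k m with rfl | hkm
    · rw [hx₃m, Pi.single_eq_same]
    · rw [Pi.single_eq_of_ne hkm]
      rcases eq_or_ne k i₀ with rfl | hki₀
      · exact hx₃i₀
      · exact hx₃k k hki₀ hkm
  obtain ⟨ε, hεmem, hεv⟩ := hfinal
  refine ⟨ε, hεmem, ?_⟩
  rw [hεv]
  exact hx₃eq
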